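/- arXiv:2201.13330 — 3 statements merged into one kernel-verified Lean document; each statement's English description precedes it below -/
import Mathlib

section
/- Let ω : [0,1] → ℝ be continuous and strictly increasing with ω(0) = 0 and ω(r) ≥ r for all r ∈ [0,1], and assume ∫₀¹ ω(r)²/r dr < ∞. Fix c₄ > 0 and χ > 1, let r_q (for q > 1) be defined as in the context, and let k₀ be the least natural number with χ^{k₀} > 19/2. Then there is a constant C > 0, depending only on χ and c₄, such that ∑_{k=k₀}^∞ χ^{−k} · log(1 / r_{χ^k + 1/2}) ≤ C · ∫₀¹ ω(r)²/r dr. -/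
open MeasureTheory
open scoped ENNReal

/-- For `q > 1`, `rq c₄ ω q = sup{ r ∈ (0,1] : c₄·ω(r) ≤ (8(q−1))^{−1/2} }`. -/
noncomputable def rq (c₄ : ℝ) (ω : ℝ → ℝ) (q : ℝ) : ℝ :=
  sSup {r : ℝ | r ∈ Set.Ioc (0 : ℝ) 1 ∧ c₄ * ω r ≤ (8 * (q - 1)) ^ (-(1 / 2) : ℝ)}

/-- If `ω : [0,1] → ℝ` is continuous, strictly increasing, `ω(0) = 0`,
`ω(r) ≥ r`, and `∫₀¹ ω(r)²/r dr < ∞`, then for `k₀` the least natural number with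
`χ^{k₀} > 19/2`, the series `∑_{k ≥ k₀} χ^{−k}·log(1/r_{χ^k+1/2})` converges and is
bounded by `C·∫₀¹ ω(r)²/r dr`, where `C > 0` depends only on `χ` and `c₄`. -/
theorem dini_series_bound (χ c₄ : ℝ) (hχ : 1 < χ) (hc₄ : 0 < c₄) :
    ∃ C > (0 : ℝ), ∀ ω : ℝ → ℝ,
      ContinuousOn ω (Set.Icc 0 1) →
      StrictMonoOn ω (Set.Icc 0 1) →
      ω 0 = 0 →
      (∀ r ∈ Set.Icc (0 : ℝ) 1, r ≤ ω r) →
      IntegrableOn (fun r => ω r ^ 2 / r) (Set.Ioc 0 1) →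
      ∀ k₀ : ℕ, 19 / 2 < χ ^ k₀ → (∀ j : ℕ, j < k₀ → χ ^ j ≤ 19 / 2) →
        Summable (fun k : ℕ =>
            χ ^ (-((k₀ + k : ℕ) : ℝ)) * Real.log (1 / rq c₄ ω (χ ^ (k₀ + k) + 1 / 2))) ∧
          ∑' k : ℕ,
              χ ^ (-((k₀ + k : ℕ) : ℝ)) * Real.log (1 / rq c₄ ω (χ ^ (k₀ + k) + 1 / 2))
            ≤ C * ∫ r in Set.Ioc (0 : ℝ) 1, ω r ^ 2 / r := by
  have hχ0 : (0:ℝ) < χ := lt_trans zero_lt_one hχ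
  have hχi : χ⁻¹ < 1 := by
    rw [inv_lt_one_iff₀]; right; exact hχ
  have hχi0 : (0:ℝ) ≤ χ⁻¹ := by positivity
  have hK0 : (0:ℝ) < (1 - χ⁻¹)⁻¹ := by
    have : (0:ℝ) < 1 - χ⁻¹ := sub_pos.mpr hχi
    positivity
  set K : ℝ := (1 - χ⁻¹)⁻¹ with hKdef
  refine ⟨8 * c₄^2 * K, by positivity, ?_⟩
  intro ω hco _hmono hω0 _hωr hint k₀ hk₀ _
  set f : ℝ → ℝ := fun r => ω r ^ 2 / r with hfdef
  set I : ℝ := ∫ r in Set.Ioc (0:ℝ) 1, f r with hIdef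
  -- basic positivity of the integrand
  have hf0 : ∀ r ∈ Set.Ioc (0:ℝ) 1, 0 ≤ f r := by
    intro r hr; exact div_nonneg (sq_nonneg _) hr.1.le
  -- the exponents
  set p : ℕ → ℝ := fun k => χ ^ (k₀ + k) with hpdef
  have hpk : ∀ k, (19:ℝ)/2 < p k := by
    intro k
    exact lt_of_lt_of_le hk₀ (pow_le_pow_right₀ hχ.le (Nat.le_add_right _ _))
  have hp0 : ∀ k, (0:ℝ) < p k := fun k => lt_trans (by norm_num) (hpk k)
  set q : ℕ → ℝ := fun k => χ ^ (k₀ + k) + 1 / 2 with hqdef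
  have hbase : ∀ k, (0:ℝ) < 8 * (q k - 1) := by
    intro k; have := hpk k; simp only [hqdef, hpdef] at *; nlinarith
  set M : ℕ → ℝ := fun k => (8 * (q k - 1)) ^ (-(1 / 2) : ℝ) with hMdef
  have hM0 : ∀ k, 0 < M k := fun k => Real.rpow_pos_of_pos (hbase k) _
  -- the sets and their sups
  set S : ℕ → Set ℝ := fun k =>
    {r : ℝ | r ∈ Set.Ioc (0 : ℝ) 1 ∧ c₄ * ω r ≤ M k} with hSdef
  set ρ : ℕ → ℝ := fun k => rq c₄ ω (q k) with hρdef
  have hρS : ∀ k, ρ k = sSup (S k) := fun k => rfl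
  have hbdd : ∀ k, BddAbove (S k) := fun k => ⟨1, fun r hr => hr.1.2⟩
  have hne : ∀ k, (S k).Nonempty := by
    intro k
    have hcw : ContinuousWithinAt ω (Set.Icc 0 1) 0 :=
      hco 0 (Set.mem_Icc.mpr ⟨le_refl _, zero_le_one⟩)
    rw [Metric.continuousWithinAt_iff] at hcw
    have hε : 0 < M k / c₄ := div_pos (hM0 k) hc₄
    obtain ⟨δ, hδ0, hδ⟩ := hcw _ hε
    refine ⟨min (δ/2) 1, ⟨lt_min (by linarith) one_pos, min_le_right _ _⟩, ?_⟩
    have hmem : min (δ/2) 1 ∈ Set.Icc (0:ℝ) 1 :=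
      ⟨(lt_min (by linarith) one_pos).le, min_le_right _ _⟩
    have hdist : dist (min (δ/2) 1) 0 < δ := by
      rw [Real.dist_eq, sub_zero, abs_of_nonneg hmem.1]
      exact lt_of_le_of_lt (min_le_left _ _) (by linarith)
    have := hδ hmem hdist
    rw [hω0, Real.dist_eq, sub_zero] at this
    have : ω (min (δ/2) 1) < M k / c₄ := lt_of_le_of_lt (le_abs_self _) this
    calc c₄ * ω (min (δ/2) 1) ≤ c₄ * (M k / c₄) :=
          mul_le_mul_of_nonneg_left this.le hc₄.le
      _ = M k := by field_simp
  have hρpos : ∀ k, 0 < ρ k := by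
    intro k
    obtain ⟨r, hr⟩ := hne k
    exact lt_of_lt_of_le hr.1.1 ((hρS k) ▸ le_csSup (hbdd k) hr)
  have hρle1 : ∀ k, ρ k ≤ 1 := by
    intro k; rw [hρS k]; exact csSup_le (hne k) (fun r hr => hr.1.2)
  have habove : ∀ k r, ρ k < r → r ∈ Set.Ioc (0:ℝ) 1 → M k < c₄ * ω r := by
    intro k r h hr
    by_contra hle
    push_neg at hle
    exact absurd ((hρS k) ▸ le_csSup (hbdd k) ⟨hr, hle⟩) (not_le.mpr h)
  have hanti : ∀ k, ρ (k+1) ≤ ρ k := by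
    intro k
    have hbm : 8 * (q k - 1) ≤ 8 * (q (k+1) - 1) := by
      have : p k ≤ p (k+1) :=
        pow_le_pow_right₀ hχ.le (by omega)
      simp only [hqdef, hpdef] at *; linarith
    have hMm : M (k+1) ≤ M k :=
      Real.rpow_le_rpow_of_nonpos (hbase k) hbm (by norm_num)
    have hsub : S (k+1) ⊆ S k := fun r hr => ⟨hr.1, hr.2.trans hMm⟩
    rw [hρS k, hρS (k+1)]
    exact csSup_le_csSup (hbdd k) (hne (k+1)) hsub
  -- τ : τ 0 = 1, τ (j+1) = ρ j
  set τ : ℕ → ℝ := fun j => Nat.casesOn j 1 ρ with hτdef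
  have hτ0 : τ 0 = 1 := rfl
  have hτs : ∀ j, τ (j+1) = ρ j := fun j => rfl
  have hτpos : ∀ j, 0 < τ j := by intro j; cases j with
    | zero => exact one_pos
    | succ n => exact hρpos n
  have hτle1 : ∀ j, τ j ≤ 1 := by intro j; cases j with
    | zero => exact le_refl _
    | succ n => exact hρle1 n
  have hτanti : ∀ j, τ (j+1) ≤ τ j := by intro j; cases j with
    | zero => exact hρle1 0
    | succ n => exact hanti n
  set d : ℕ → ℝ := fun j => Real.log (τ j) - Real.log (τ (j+1)) with hddef
  have hd0 : ∀ j, 0 ≤ d j := by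
    intro j
    have := Real.log_le_log (hτpos (j+1)) (hτanti j)
    simp only [hddef]; linarith
  -- integrability on pieces
  have hintf : ∀ j, IntegrableOn f (Set.Ioc (τ (j+1)) (τ j)) := by
    intro j
    exact hint.mono_set (Set.Ioc_subset_Ioc (hτpos (j+1)).le (hτle1 j))
  have hintinv : ∀ j, IntegrableOn (fun r : ℝ => r⁻¹) (Set.Ioc (τ (j+1)) (τ j)) := by
    intro j
    refine (ContinuousOn.integrableOn_Icc ?_).mono_set Set.Ioc_subset_Icc_self
    intro x hx
    exact (continuousAt_inv₀ (ne_of_gt (lt_of_lt_of_le (hτpos (j+1)) hx.1))).continuousWithinAt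
  -- key per-term estimate
  have key : ∀ j, (p j)⁻¹ * d j ≤ 8 * c₄^2 * ∫ r in Set.Ioc (τ (j+1)) (τ j), f r := by
    intro j
    have hid : d j = ∫ r in Set.Ioc (τ (j+1)) (τ j), r⁻¹ := by
      rw [← intervalIntegral.integral_of_le (hτanti j),
        integral_inv (Set.notMem_uIcc_of_lt (hτpos (j+1)) (hτpos j)),
        Real.log_div (ne_of_gt (hτpos j)) (ne_of_gt (hτpos (j+1)))]
    have hpt : ∀ r ∈ Set.Ioc (τ (j+1)) (τ j), (p j)⁻¹ * r⁻¹ ≤ 8 * c₄^2 * f r := by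
      intro r hr
      have hr0 : 0 < r := lt_trans (hτpos (j+1)) hr.1
      have hrI : r ∈ Set.Ioc (0:ℝ) 1 := ⟨hr0, hr.2.trans (hτle1 j)⟩
      have hM : M j < c₄ * ω r := habove j r (by rw [← hτs j]; exact hr.1) hrI
      have hMsq : (M j)^2 = (8 * (q j - 1))⁻¹ := by
        rw [hMdef, sq, ← Real.rpow_add (hbase j),
          show (-(1/2) + -(1/2) : ℝ) = -1 by norm_num, Real.rpow_neg_one]
      have h1 : (8 * (q j - 1))⁻¹ < c₄^2 * ω r ^ 2 := by
        rw [← hMsq]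
        calc (M j)^2 < (c₄ * ω r)^2 := by
              apply sq_lt_sq' _ hM
              have := hM0 j
              nlinarith
          _ = c₄^2 * ω r ^ 2 := by ring
      have h2 : (8 * p j)⁻¹ ≤ (8 * (q j - 1))⁻¹ := by
        apply inv_anti₀ (hbase j)
        simp only [hqdef, hpdef] at *; linarith
      have h3 : (p j)⁻¹ ≤ 8 * c₄^2 * ω r ^ 2 := by
        have h4 : (8 * p j)⁻¹ ≤ c₄^2 * ω r ^ 2 := le_of_lt (lt_of_le_of_lt h2 h1)
        rw [mul_inv] at h4
        have := hp0 j
        nlinarith [inv_nonneg.mpr (hp0 j).le]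
      calc (p j)⁻¹ * r⁻¹ ≤ (8 * c₄^2 * ω r ^ 2) * r⁻¹ :=
            mul_le_mul_of_nonneg_right h3 (inv_nonneg.mpr hr0.le)
        _ = 8 * c₄^2 * f r := by
            simp only [hfdef]; field_simp
    calc (p j)⁻¹ * d j = ∫ r in Set.Ioc (τ (j+1)) (τ j), (p j)⁻¹ * r⁻¹ := by
          rw [hid, integral_const_mul]
      _ ≤ ∫ r in Set.Ioc (τ (j+1)) (τ j), 8 * c₄^2 * f r := by
          apply setIntegral_mono_on ((hintinv j).const_mul _) ((hintf j).const_mul _)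
            measurableSet_Ioc hpt
      _ = 8 * c₄^2 * ∫ r in Set.Ioc (τ (j+1)) (τ j), f r := integral_const_mul _ _
  -- telescoping the integrals
  have htel : ∀ N, ∑ j ∈ Finset.range N, ∫ r in Set.Ioc (τ (j+1)) (τ j), f r
      = ∫ r in Set.Ioc (τ N) 1, f r := by
    intro N
    induction N with
    | zero => simp [hτ0]
    | succ n ih =>
        rw [Finset.sum_range_succ, ih, add_comm,
          ← setIntegral_union (Set.Ioc_disjoint_Ioc_of_le le_rfl) measurableSet_Ioc
            (hintf n) (hint.mono_set (Set.Ioc_subset_Ioc (hτpos n).le (le_refl 1)))]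
        rw [Set.Ioc_union_Ioc_eq_Ioc (hτanti n) (hτle1 n)]
  have hItail : ∀ N, (∫ r in Set.Ioc (τ N) 1, f r) ≤ I := by
    intro N
    rw [hIdef]
    apply setIntegral_mono_set hint
    · exact (ae_restrict_iff' measurableSet_Ioc).2 (Filter.Eventually.of_forall hf0)
    · exact (Set.Ioc_subset_Ioc (hτpos N).le (le_refl 1)).eventuallyLE
  -- geometric tail estimate
  have hgeo : ∀ j N, ∑ k ∈ Finset.Ico j N, (p k)⁻¹ ≤ (p j)⁻¹ * K := by
    intro j N
    rcases le_or_gt N j with h | h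
    · rw [Finset.Ico_eq_empty (by omega)]
      simp only [Finset.sum_empty]
      positivity
    · rw [Finset.sum_Ico_eq_sum_range]
      have hform : ∀ i, (p (j + i))⁻¹ = (p j)⁻¹ * (χ⁻¹) ^ i := by
        intro i
        simp only [hpdef]
        rw [← inv_pow, ← inv_pow, ← pow_add]
        congr 1
        omega
      calc ∑ i ∈ Finset.range (N - j), (p (j + i))⁻¹
          = (p j)⁻¹ * ∑ i ∈ Finset.range (N - j), (χ⁻¹) ^ i := by
            rw [Finset.mul_sum]; exact Finset.sum_congr rfl (fun i _ => hform i)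
        _ ≤ (p j)⁻¹ * K := by
            apply mul_le_mul_of_nonneg_left _ (inv_nonneg.mpr (hp0 j).le)
            have hs := Summable.sum_le_tsum (Finset.range (N - j))
              (fun i _ => pow_nonneg hχi0 i) (summable_geometric_of_lt_one hχi0 hχi)
            rwa [tsum_geometric_of_lt_one hχi0 hχi] at hs
  -- the series terms
  set c : ℕ → ℝ := fun k =>
    χ ^ (-((k₀ + k : ℕ) : ℝ)) * Real.log (1 / rq c₄ ω (χ ^ (k₀ + k) + 1 / 2)) with hcdef
  have hcform : ∀ k, c k = (p k)⁻¹ * (- Real.log (ρ k)) := by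
    intro k
    simp only [hcdef, hpdef, hρdef, hqdef]
    rw [one_div, Real.log_inv, Real.rpow_neg hχ0.le, Real.rpow_natCast]
  have hc0 : ∀ k, 0 ≤ c k := by
    intro k
    rw [hcform k]
    apply mul_nonneg (inv_nonneg.mpr (hp0 k).le)
    have := Real.log_nonpos (hρpos k).le (hρle1 k)
    linarith
  have hlog : ∀ k, - Real.log (ρ k) = ∑ j ∈ Finset.range (k+1), d j := by
    intro k
    rw [Finset.sum_range_sub' (fun i => Real.log (τ i)) (k+1)]
    simp [hτ0, hτs]
  -- the main finite-sum bound
  have hmain : ∀ N, ∑ k ∈ Finset.range N, c k ≤ 8 * c₄^2 * K * I := by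
    intro N
    have hI0 : 0 ≤ I := by
      rw [hIdef]; exact setIntegral_nonneg measurableSet_Ioc hf0
    calc ∑ k ∈ Finset.range N, c k
        = ∑ k ∈ Finset.Ico 0 N, ∑ j ∈ Finset.Ico 0 (k+1), (p k)⁻¹ * d j := by
          rw [Finset.range_eq_Ico]
          refine Finset.sum_congr rfl (fun k _ => ?_)
          rw [← Finset.range_eq_Ico, hcform k, hlog k, Finset.mul_sum]
      _ = ∑ j ∈ Finset.Ico 0 N, ∑ k ∈ Finset.Ico j N, (p k)⁻¹ * d j :=
          (Finset.sum_Ico_Ico_comm 0 N (fun i j => (p j)⁻¹ * d i)).symm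
      _ = ∑ j ∈ Finset.Ico 0 N, d j * ∑ k ∈ Finset.Ico j N, (p k)⁻¹ := by
          refine Finset.sum_congr rfl (fun j _ => ?_)
          rw [Finset.mul_sum]
          exact Finset.sum_congr rfl (fun k _ => mul_comm _ _)
      _ ≤ ∑ j ∈ Finset.Ico 0 N, d j * ((p j)⁻¹ * K) :=
          Finset.sum_le_sum (fun j _ => mul_le_mul_of_nonneg_left (hgeo j N) (hd0 j))
      _ = K * ∑ j ∈ Finset.range N, (p j)⁻¹ * d j := by
          rw [← Finset.range_eq_Ico, Finset.mul_sum]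
          exact Finset.sum_congr rfl (fun j _ => by ring)
      _ ≤ K * ∑ j ∈ Finset.range N, 8 * c₄^2 * ∫ r in Set.Ioc (τ (j+1)) (τ j), f r :=
          mul_le_mul_of_nonneg_left (Finset.sum_le_sum (fun j _ => key j)) hK0.le
      _ = K * (8 * c₄^2) * ∫ r in Set.Ioc (τ N) 1, f r := by
          have h8 : ∑ j ∈ Finset.range N, 8 * c₄^2 * ∫ r in Set.Ioc (τ (j+1)) (τ j), f r
              = 8 * c₄^2 * ∑ j ∈ Finset.range N, ∫ r in Set.Ioc (τ (j+1)) (τ j), f r :=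
            (Finset.mul_sum _ _ _).symm
          rw [h8, htel N]; ring
      _ ≤ K * (8 * c₄^2) * I := by
          apply mul_le_mul_of_nonneg_left (hItail N) (by positivity)
      _ = 8 * c₄^2 * K * I := by ring
  have hbound : ∀ u : Finset ℕ, ∑ k ∈ u, c k ≤ 8 * c₄^2 * K * I := by
    intro u
    obtain ⟨n, hn⟩ := u.exists_nat_subset_range
    calc ∑ k ∈ u, c k ≤ ∑ k ∈ Finset.range n, c k :=
          Finset.sum_le_sum_of_subset_of_nonneg hn (fun i _ _ => hc0 i)
      _ ≤ 8 * c₄^2 * K * I := hmain n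
  have hsum : Summable c := summable_of_sum_le (fun k => hc0 k) hbound
  exact ⟨hsum, Summable.tsum_le_of_sum_le hsum hbound⟩
end

section
/- Let ω : [0,1] → ℝ be continuous on [0,1], continuously differentiable on (0,1] with ω'(r) > 0 for all r ∈ (0,1], ω(0) = 0, and assume ∫₀¹ ω(r)²/r dr < ∞. Let ω⁻¹ : [0, ω(1)] → [0,1] denote the inverse function of ω. Then ∫₀^{ω(1)} s · log(1/ω⁻¹(s)) ds ≤ ∫₀¹ ω(r)²/(2r) dr. -/
open MeasureTheory
open scoped ENNReal

/-- If `ω : [0,1] → ℝ` is continuous on `[0,1]`, continuously differentiable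
on `(0,1]` with positive derivative, `ω(0) = 0`, and `∫₀¹ ω(r)²/r dr < ∞`, and `g = ω⁻¹`
is the inverse function of `ω`, then `∫₀^{ω(1)} s·log(1/ω⁻¹(s)) ds ≤ ∫₀¹ ω(r)²/(2r) dr`. -/
theorem integral_log_inverse_bound (ω ω' g : ℝ → ℝ)
    (hc : ContinuousOn ω (Set.Icc 0 1))
    (hderiv : ∀ r ∈ Set.Ioc (0 : ℝ) 1, HasDerivWithinAt ω (ω' r) (Set.Icc 0 1) r)
    (hc' : ContinuousOn ω' (Set.Ioc 0 1))
    (hpos : ∀ r ∈ Set.Ioc (0 : ℝ) 1, 0 < ω' r)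
    (h0 : ω 0 = 0)
    (hint : IntegrableOn (fun r => ω r ^ 2 / r) (Set.Ioc 0 1))
    (hg : ∀ r ∈ Set.Icc (0 : ℝ) 1, g (ω r) = r)
    (hg' : ∀ s ∈ Set.Icc (0 : ℝ) (ω 1), ω (g s) = s) :
    ∫⁻ s in Set.Ioc (0 : ℝ) (ω 1), ENNReal.ofReal (s * Real.log (1 / g s))
      ≤ ENNReal.ofReal (∫ r in Set.Ioc (0 : ℝ) 1, ω r ^ 2 / (2 * r)) := by
  have h01 : (0:ℝ) ≤ 1 := zero_le_one
  -- strict monotonicity of ω on [0,1]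
  have hmono : StrictMonoOn ω (Set.Icc 0 1) := by
    apply strictMonoOn_of_deriv_pos (convex_Icc 0 1) hc
    intro x hx
    rw [interior_Icc] at hx
    have hx' : x ∈ Set.Ioc (0:ℝ) 1 := ⟨hx.1, hx.2.le⟩
    have hd : HasDerivAt ω (ω' x) x :=
      (hderiv x hx').hasDerivAt (Icc_mem_nhds hx.1 hx.2)
    rw [hd.deriv]; exact hpos x hx'
  have hωpos : ∀ r ∈ Set.Ioc (0:ℝ) 1, 0 < ω r := by
    intro r hr
    have := hmono (Set.left_mem_Icc.2 h01) ⟨hr.1.le, hr.2⟩ hr.1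
    rwa [h0] at this
  have hωle : ∀ r ∈ Set.Ioc (0:ℝ) 1, ω r ≤ ω 1 := fun r hr =>
    hmono.monotoneOn ⟨hr.1.le, hr.2⟩ (Set.right_mem_Icc.2 h01) hr.2
  -- image of (0,1] under ω
  have himg : ω '' Set.Ioc 0 1 = Set.Ioc 0 (ω 1) := by
    apply Set.Subset.antisymm
    · rintro s ⟨r, hr, rfl⟩
      exact ⟨hωpos r hr, hωle r hr⟩
    · intro s hs
      have hmem : s ∈ Set.Icc (ω 0) (ω 1) := by rw [h0]; exact ⟨hs.1.le, hs.2⟩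
      obtain ⟨r, hr, hrs⟩ := intermediate_value_Icc h01 hc hmem
      refine ⟨r, ⟨?_, hr.2⟩, hrs⟩
      rcases hr.1.lt_or_eq with h | h
      · exact h
      · exfalso
        rw [← h, h0] at hrs
        exact absurd hrs.symm (ne_of_gt hs.1)
  have hinj : Set.InjOn ω (Set.Ioc 0 1) :=
    hmono.injOn.mono Set.Ioc_subset_Icc_self
  have hFderiv : ∀ x ∈ Set.Ioc (0:ℝ) 1,
      HasFDerivWithinAt ω ((1 : ℝ →L[ℝ] ℝ).smulRight (ω' x)) (Set.Ioc 0 1) x :=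
    fun x hx => ((hderiv x hx).mono Set.Ioc_subset_Icc_self).hasFDerivWithinAt
  -- change of variables s = ω r
  have hchange :
      ∫⁻ s in Set.Ioc (0:ℝ) (ω 1), ENNReal.ofReal (s * Real.log (1 / g s))
        = ∫⁻ r in Set.Ioc (0:ℝ) 1,
            ENNReal.ofReal |ω' r| * ENNReal.ofReal (ω r * Real.log (1 / g (ω r))) := by
    rw [← himg]
    have := lintegral_image_eq_lintegral_abs_det_fderiv_mul volume measurableSet_Ioc
      hFderiv hinj (fun s => ENNReal.ofReal (s * Real.log (1 / g s)))
    simp only [ContinuousLinearMap.smulRight_one_eq_toSpanSingleton, ContinuousLinearMap.det_toSpanSingleton] at this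
    exact this
  rw [hchange]
  have hcongr : ∫⁻ r in Set.Ioc (0:ℝ) 1,
      ENNReal.ofReal |ω' r| * ENNReal.ofReal (ω r * Real.log (1 / g (ω r)))
      = ∫⁻ r in Set.Ioc (0:ℝ) 1,
          ENNReal.ofReal (ω' r * (ω r * Real.log (1/r))) := by
    apply setLIntegral_congr_fun measurableSet_Ioc
    intro r hr
    dsimp only
    rw [hg r ⟨hr.1.le, hr.2⟩, abs_of_pos (hpos r hr),
      ← ENNReal.ofReal_mul (hpos r hr).le]
  rw [hcongr]
  set C : ℝ := ∫ r in Set.Ioc (0:ℝ) 1, ω r ^ 2 / (2 * r) with hCdef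
  have hCint : IntegrableOn (fun r => ω r ^ 2 / (2 * r)) (Set.Ioc 0 1) := by
    have h2 : IntegrableOn (fun r => ω r ^ 2 / r / 2) (Set.Ioc 0 1) := hint.div_const 2
    exact h2.congr_fun (fun r _ => by dsimp only; rw [div_div, mul_comm]) measurableSet_Ioc
  -- key estimate on Ioc ε 1
  have key : ∀ ε : ℝ, 0 < ε → ε ≤ 1 →
      ∫⁻ r in Set.Ioc ε 1, ENNReal.ofReal (ω' r * (ω r * Real.log (1/r)))
        ≤ ENNReal.ofReal C := by
    intro ε hε hε1
    have hsubI : Set.Icc ε 1 ⊆ Set.Ioc 0 1 := fun x hx => ⟨lt_of_lt_of_le hε hx.1, hx.2⟩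
    have hsub' : Set.Ioc ε 1 ⊆ Set.Ioc 0 1 := fun x hx => ⟨hε.trans hx.1, hx.2⟩
    have hcontω : ContinuousOn ω (Set.Icc ε 1) :=
      hc.mono (hsubI.trans Set.Ioc_subset_Icc_self)
    have hcontω' : ContinuousOn ω' (Set.Icc ε 1) := hc'.mono hsubI
    have hne : ∀ x ∈ Set.Icc ε 1, x ≠ 0 := fun x hx => ne_of_gt (hsubI hx).1
    have hcontlog : ContinuousOn (fun r : ℝ => Real.log (1/r)) (Set.Icc ε 1) := by
      apply ContinuousOn.log
      · exact continuousOn_const.div continuousOn_id hne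
      · intro x hx
        exact one_div_ne_zero (hne x hx)
    have hconth : ContinuousOn (fun r => ω' r * (ω r * Real.log (1/r)))
        (Set.Icc ε 1) := hcontω'.mul (hcontω.mul hcontlog)
    have hcontD : ContinuousOn
        (fun r => ω r ^ 2 / (2 * r) - ω' r * (ω r * Real.log (1/r))) (Set.Icc ε 1) := by
      apply ContinuousOn.sub ?_ hconth
      apply (hcontω.pow 2).div (continuousOn_const.mul continuousOn_id)
      intro x hx
      have := (hsubI hx).1
      exact mul_ne_zero two_ne_zero this.ne'
    -- fundamental theorem of calculus on [ε,1]
    have hftc : ∫ r in ε..1, (ω r ^ 2 / (2 * r) - ω' r * (ω r * Real.log (1/r)))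
        = ω 1 ^ 2 * Real.log 1 / 2 - ω ε ^ 2 * Real.log ε / 2 := by
      refine intervalIntegral.integral_eq_sub_of_hasDeriv_right_of_le
        (f := fun r => ω r ^ 2 * Real.log r / 2) hε1 ?_ ?_ ?_
      · exact (hcontω.pow 2).mul (Real.continuousOn_log.mono fun x hx =>
          hne x hx) |>.div_const 2
      · intro x hx
        have hx' : x ∈ Set.Ioo (0:ℝ) 1 := ⟨hε.trans hx.1, hx.2⟩
        have hω : HasDerivAt ω (ω' x) x :=
          (hderiv x ⟨hx'.1, hx'.2.le⟩).hasDerivAt (Icc_mem_nhds hx'.1 hx'.2)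
        have hlog : HasDerivAt Real.log x⁻¹ x := Real.hasDerivAt_log (ne_of_gt hx'.1)
        have hG : HasDerivAt (fun r => ω r ^ 2 * Real.log r / 2)
            ((2 * ω x ^ 1 * ω' x * Real.log x + ω x ^ 2 * x⁻¹) / 2) x :=
          ((hω.pow 2).mul hlog).div_const 2
        have heq : (2 * ω x ^ 1 * ω' x * Real.log x + ω x ^ 2 * x⁻¹) / 2
            = ω x ^ 2 / (2 * x) - ω' x * (ω x * Real.log (1/x)) := by
          rw [one_div, Real.log_inv]; ring
        rw [heq] at hG
        exact hG.hasDerivWithinAt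
      · rw [intervalIntegrable_iff_integrableOn_Icc_of_le hε1]
        exact hcontD.integrableOn_compact isCompact_Icc
    have hεlog : Real.log ε ≤ 0 := Real.log_nonpos hε.le hε1
    have hdiffnn : 0 ≤ ∫ r in ε..1, (ω r ^ 2 / (2 * r) - ω' r * (ω r * Real.log (1/r))) := by
      rw [hftc, Real.log_one]
      nlinarith [sq_nonneg (ω ε)]
    have hi1 : IntervalIntegrable (fun r => ω r ^ 2 / (2 * r)) volume ε 1 := by
      rw [intervalIntegrable_iff_integrableOn_Icc_of_le hε1]
      exact ((hcontD.add hconth).congr (by intro x _; simp only [Pi.add_apply]; ring)).integrableOn_compact isCompact_Icc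
    have hi2 : IntervalIntegrable (fun r => ω' r * (ω r * Real.log (1/r))) volume ε 1 := by
      rw [intervalIntegrable_iff_integrableOn_Icc_of_le hε1]
      exact hconth.integrableOn_compact isCompact_Icc
    have hsplit := intervalIntegral.integral_sub hi1 hi2
    have hle : ∫ r in ε..1, ω' r * (ω r * Real.log (1/r))
        ≤ ∫ r in ε..1, ω r ^ 2 / (2 * r) := by linarith [hsplit ▸ hdiffnn]
    have hle2 : ∫ r in Set.Ioc ε 1, ω r ^ 2 / (2 * r) ≤ C := by
      apply setIntegral_mono_set hCint ?_ (HasSubset.Subset.eventuallyLE hsub')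
      filter_upwards [ae_restrict_mem measurableSet_Ioc] with r hr
      have := hr.1
      positivity
    have hInth : IntegrableOn (fun r => ω' r * (ω r * Real.log (1/r))) (Set.Ioc ε 1) :=
      (hconth.integrableOn_compact isCompact_Icc).mono_set Set.Ioc_subset_Icc_self
    have hnn_ae : 0 ≤ᵐ[volume.restrict (Set.Ioc ε 1)]
        fun r => ω' r * (ω r * Real.log (1/r)) := by
      filter_upwards [ae_restrict_mem measurableSet_Ioc] with r hr
      have h1 : 0 < ω' r := hpos r (hsub' hr)
      have h2 : 0 ≤ ω r := (hωpos r (hsub' hr)).le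
      have h3 : 0 ≤ Real.log (1/r) := by
        apply Real.log_nonneg
        rw [le_div_iff₀ (hε.trans hr.1), one_mul]
        exact hr.2
      positivity
    rw [← MeasureTheory.ofReal_integral_eq_lintegral_ofReal hInth hnn_ae]
    apply ENNReal.ofReal_le_ofReal
    calc ∫ r in Set.Ioc ε 1, ω' r * (ω r * Real.log (1/r))
        = ∫ r in ε..1, ω' r * (ω r * Real.log (1/r)) :=
          (intervalIntegral.integral_of_le hε1).symm
      _ ≤ ∫ r in ε..1, ω r ^ 2 / (2 * r) := hle
      _ = ∫ r in Set.Ioc ε 1, ω r ^ 2 / (2 * r) := intervalIntegral.integral_of_le hε1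
      _ ≤ C := hle2
  -- monotone convergence along Ioc (1/(n+1)) 1 ↑ Ioc 0 1
  set φ : ℝ → ℝ≥0∞ := fun r => ENNReal.ofReal (ω' r * (ω r * Real.log (1/r))) with hφdef
  have hφmeas : AEMeasurable φ (volume.restrict (Set.Ioc (0:ℝ) 1)) := by
    apply ENNReal.measurable_ofReal.comp_aemeasurable
    apply ContinuousOn.aemeasurable ?_ measurableSet_Ioc
    apply hc'.mul
    apply (hc.mono Set.Ioc_subset_Icc_self).mul
    apply ContinuousOn.log
    · exact continuousOn_const.div continuousOn_id fun x hx => ne_of_gt hx.1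
    · intro x hx
      exact one_div_ne_zero (ne_of_gt hx.1)
  set s : ℕ → Set ℝ := fun n => Set.Ioc (1/(n+1:ℝ)) 1 with hsdef
  have hspos : ∀ n : ℕ, (0:ℝ) < 1/(n+1:ℝ) := by
    intro n; positivity
  have hsle : ∀ n : ℕ, (1/(n+1:ℝ)) ≤ 1 := by
    intro n
    rw [div_le_one (by positivity)]
    simp
  have hsubs : ∀ n, s n ⊆ Set.Ioc (0:ℝ) 1 := fun n x hx => ⟨(hspos n).trans hx.1, hx.2⟩
  have hmain : ∫⁻ r in Set.Ioc (0:ℝ) 1, φ r = ⨆ n, ∫⁻ r in s n, φ r := by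
    have hind : ∀ n, AEMeasurable ((s n).indicator φ) (volume.restrict (Set.Ioc (0:ℝ) 1)) :=
      fun n => hφmeas.indicator measurableSet_Ioc
    have hmonoind : Monotone fun n => (s n).indicator φ := by
      intro m n hmn
      apply Set.indicator_le_indicator_of_subset ?_ (fun _ => zero_le)
      apply Set.Ioc_subset_Ioc_left
      apply one_div_le_one_div_of_le (by positivity)
      have : (m:ℝ) ≤ n := Nat.cast_le.2 hmn
      linarith
    have step1 : ∫⁻ r in Set.Ioc (0:ℝ) 1, φ r
        = ∫⁻ r in Set.Ioc (0:ℝ) 1, ⨆ n, (s n).indicator φ r := by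
      apply lintegral_congr_ae
      filter_upwards [ae_restrict_mem measurableSet_Ioc] with x hx
      obtain ⟨n, hn⟩ := exists_nat_one_div_lt hx.1
      apply le_antisymm
      · refine le_iSup_of_le n ?_
        have hxm : x ∈ s n := ⟨hn, hx.2⟩
        rw [Set.indicator_of_mem hxm]
      · apply iSup_le
        intro n
        exact Set.indicator_le' (fun _ _ => le_rfl) (fun _ _ => zero_le) x
    rw [step1, lintegral_iSup' hind (ae_of_all _ fun x m n hmn => hmonoind hmn x)]
    congr 1
    funext n
    rw [lintegral_indicator measurableSet_Ioc,
      Measure.restrict_restrict measurableSet_Ioc,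
      Set.inter_eq_self_of_subset_left (hsubs n)]
  rw [hmain]
  exact iSup_le fun n => key _ (hspos n) (hsle n)
end

section
/- Let (X, μ) be a measure space with 0 < μ(X) < ∞, let χ > 1 be real, let k₀ be a natural number, and let u : X → ℝ be a nonnegative measurable function with ‖u‖_{L^{χ^{k₀}}(μ)} < ∞. Suppose there are real numbers A_k ≥ 1 for k ≥ k₀ such that ‖u‖_{L^{χ^{k+1}}(μ)} ≤ A_k^{1/χ^k} · ‖u‖_{L^{χ^k}(μ)} for every integer k ≥ k₀, and that S := ∑_{k=k₀}^∞ χ^{−k} log A_k < ∞. Then u ∈ L^∞(μ) and essSup u ≤ e^S · ‖u‖_{L^{χ^{k₀}}(μ)}. -/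
open MeasureTheory
open scoped ENNReal

/-- Abstract Nash–Moser iteration: on a finite measure space, if
`‖u‖_{L^{χ^{k+1}}} ≤ A_k^{1/χ^k}·‖u‖_{L^{χ^k}}` for all `k ≥ k₀` with `A_k ≥ 1` and
`S = ∑_{k ≥ k₀} χ^{−k} log A_k < ∞`, then `u ∈ L^∞` and
`essSup u ≤ e^S·‖u‖_{L^{χ^{k₀}}}`. -/
theorem moser_iteration_abstract
    {X : Type*} [MeasurableSpace X] (μ : Measure X) [IsFiniteMeasure μ]
    (hμ : 0 < μ Set.univ)
    (χ : ℝ) (hχ : 1 < χ) (k₀ : ℕ)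
    (u : X → ℝ) (hu : Measurable u) (hu0 : ∀ x, 0 ≤ u x)
    (hfin : eLpNorm u (ENNReal.ofReal (χ ^ k₀)) μ < ⊤)
    (A : ℕ → ℝ) (hA : ∀ k, k₀ ≤ k → 1 ≤ A k)
    (hrec : ∀ k, k₀ ≤ k →
      eLpNorm u (ENNReal.ofReal (χ ^ (k + 1))) μ
        ≤ ENNReal.ofReal (A k ^ (1 / χ ^ k)) * eLpNorm u (ENNReal.ofReal (χ ^ k)) μ)
    (hS : Summable fun k : ℕ => χ ^ (-((k₀ + k : ℕ) : ℝ)) * Real.log (A (k₀ + k))) :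
    MemLp u ⊤ μ ∧
      eLpNorm u ⊤ μ
        ≤ ENNReal.ofReal
            (Real.exp (∑' k : ℕ, χ ^ (-((k₀ + k : ℕ) : ℝ)) * Real.log (A (k₀ + k)))) *
          eLpNorm u (ENNReal.ofReal (χ ^ k₀)) μ := by
  have hχ0 : (0:ℝ) < χ := lt_trans one_pos hχ
  have hpow_pos : ∀ k : ℕ, (0:ℝ) < χ ^ k := fun k => pow_pos hχ0 k
  have hP0 : ∀ k : ℕ, ENNReal.ofReal (χ ^ k) ≠ 0 := fun k => by
    simp [ENNReal.ofReal_eq_zero, not_le, hpow_pos k]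
  have htoReal : ∀ k : ℕ, (ENNReal.ofReal (χ ^ k)).toReal = χ ^ k := fun k =>
    ENNReal.toReal_ofReal (hpow_pos k).le
  set N₀ := eLpNorm u (ENNReal.ofReal (χ ^ k₀)) μ with hN₀
  set S := ∑' k : ℕ, χ ^ (-((k₀ + k : ℕ) : ℝ)) * Real.log (A (k₀ + k)) with hSdef
  have hterm_nonneg : ∀ j : ℕ, 0 ≤ χ ^ (-((k₀ + j : ℕ) : ℝ)) * Real.log (A (k₀ + j)) := fun j =>
    mul_nonneg (Real.rpow_nonneg hχ0.le _) (Real.log_nonneg (hA _ (Nat.le_add_right _ _)))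
  -- the inductive bound on partial products
  have hbound : ∀ n : ℕ, eLpNorm u (ENNReal.ofReal (χ ^ (k₀ + n))) μ
      ≤ ENNReal.ofReal (Real.exp (∑ j ∈ Finset.range n,
          χ ^ (-((k₀ + j : ℕ) : ℝ)) * Real.log (A (k₀ + j)))) * N₀ := by
    intro n
    induction n with
    | zero => simp [N₀]
    | succ n ih =>
      have hApos : (0:ℝ) < A (k₀ + n) := lt_of_lt_of_le one_pos (hA _ (Nat.le_add_right _ _))
      have hAr : A (k₀ + n) ^ (1 / χ ^ (k₀ + n))
          = Real.exp (χ ^ (-((k₀ + n : ℕ) : ℝ)) * Real.log (A (k₀ + n))) := by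
        rw [Real.rpow_def_of_pos hApos]
        congr 1
        rw [Real.rpow_neg hχ0.le, Real.rpow_natCast]
        ring
      calc eLpNorm u (ENNReal.ofReal (χ ^ (k₀ + (n+1)))) μ
          ≤ ENNReal.ofReal (A (k₀+n) ^ (1 / χ ^ (k₀+n)))
              * eLpNorm u (ENNReal.ofReal (χ ^ (k₀+n))) μ := by
            have := hrec (k₀ + n) (Nat.le_add_right _ _)
            rwa [show k₀ + n + 1 = k₀ + (n+1) by ring] at this
        _ ≤ ENNReal.ofReal (A (k₀+n) ^ (1 / χ ^ (k₀+n)))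
              * (ENNReal.ofReal (Real.exp (∑ j ∈ Finset.range n,
                  χ ^ (-((k₀ + j : ℕ) : ℝ)) * Real.log (A (k₀ + j)))) * N₀) := by
            gcongr
        _ = _ := by
            rw [← mul_assoc, ← ENNReal.ofReal_mul (by positivity), hAr, ← Real.exp_add,
              Finset.sum_range_succ, add_comm]
  -- the uniform bound
  have hC : ∀ n : ℕ, eLpNorm u (ENNReal.ofReal (χ ^ (k₀ + n))) μ
      ≤ ENNReal.ofReal (Real.exp S) * N₀ := by
    intro n
    refine (hbound n).trans ?_
    gcongr
    · exact Summable.sum_le_tsum (Finset.range n) (fun i _ => hterm_nonneg i) hS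
  set C := ENNReal.ofReal (Real.exp S) * N₀ with hCdef
  have hCfin : C ≠ ⊤ := ENNReal.mul_ne_top ENNReal.ofReal_ne_top hfin.ne
  -- the key vanishing-measure estimate
  have hzero : ∀ ε : ℝ≥0∞, C < ε → ε ≠ ⊤ → μ {x | ε ≤ (‖u x‖₊ : ℝ≥0∞)} = 0 := by
    intro ε hCε hεtop
    have hε0 : ε ≠ 0 := (lt_of_le_of_lt (zero_le : 0 ≤ C) hCε).ne'
    set a := ε⁻¹ * C with ha
    have ha1 : a < 1 := by
      have : ε⁻¹ * C < ε⁻¹ * ε :=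
        (ENNReal.mul_lt_mul_iff_right (ENNReal.inv_ne_zero.mpr hεtop)
          (ENNReal.inv_ne_top.mpr hε0)).mpr hCε
      rwa [ENNReal.inv_mul_cancel hε0 hεtop] at this
    set b := a ^ (χ - 1) with hb
    have hb1 : b < 1 := ENNReal.rpow_lt_one ha1 (by linarith)
    have hkey : ∀ n : ℕ, μ {x | ε ≤ (‖u x‖₊ : ℝ≥0∞)} ≤ b ^ n := by
      intro n
      have cheb := meas_ge_le_mul_pow_eLpNorm_enorm μ (hP0 (k₀+n)) ENNReal.ofReal_ne_top
        hu.aestronglyMeasurable hε0 (fun h => absurd h hεtop)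
      rw [htoReal (k₀+n)] at cheb
      have h1 : μ {x | ε ≤ (‖u x‖₊ : ℝ≥0∞)} ≤ a ^ (χ ^ (k₀+n)) := by
        refine cheb.trans ?_
        rw [ha, ENNReal.mul_rpow_of_nonneg _ _ (hpow_pos (k₀+n)).le]
        gcongr
        exact hC n
      refine h1.trans ?_
      have hexp : (n : ℝ) * (χ - 1) ≤ χ ^ (k₀ + n) := by
        have h2 : (1:ℝ) + n * (χ - 1) ≤ χ ^ n := by
          have := one_add_mul_le_pow (by linarith : (-2:ℝ) ≤ χ - 1) n
          rwa [show 1 + (χ - 1) = χ by ring] at this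
        have h3 : χ ^ n ≤ χ ^ (k₀ + n) := pow_le_pow_right₀ hχ.le (Nat.le_add_left _ _)
        nlinarith [mul_nonneg (Nat.cast_nonneg (α := ℝ) n) (by linarith : (0:ℝ) ≤ χ - 1)]
      calc a ^ (χ ^ (k₀+n)) ≤ a ^ ((n : ℝ) * (χ - 1)) :=
            ENNReal.rpow_le_rpow_of_exponent_ge ha1.le hexp
        _ = b ^ n := by
            rw [hb, ← ENNReal.rpow_natCast (a ^ (χ - 1)) n, ← ENNReal.rpow_mul, mul_comm]
    have htend : Filter.Tendsto (fun n : ℕ => b ^ n) Filter.atTop (nhds 0) :=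
      ENNReal.tendsto_pow_atTop_nhds_zero_of_lt_one hb1
    exact le_antisymm (ge_of_tendsto' htend hkey) zero_le
  -- the a.e. bound
  have hae : ∀ᵐ x ∂μ, (‖u x‖₊ : ℝ≥0∞) ≤ C := by
    rw [MeasureTheory.ae_iff]
    refine measure_mono_null (fun x hx => ?_)
      (measure_iUnion_null (s := fun m : ℕ => {x | C + ((m:ℝ≥0∞)+1)⁻¹ ≤ (‖u x‖₊ : ℝ≥0∞)})
        (fun m => hzero _ ?_ ?_))
    · simp only [Set.mem_setOf_eq, not_le] at hx
      have hsub : C + ((‖u x‖₊ : ℝ≥0∞) - C) = (‖u x‖₊ : ℝ≥0∞) := add_tsub_cancel_of_le hx.le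
      have hne : (‖u x‖₊ : ℝ≥0∞) - C ≠ 0 := by
        rw [← pos_iff_ne_zero, tsub_pos_iff_lt]; exact hx
      obtain ⟨n, hn⟩ := ENNReal.exists_inv_nat_lt hne
      refine Set.mem_iUnion.mpr ⟨n, ?_⟩
      simp only [Set.mem_setOf_eq]
      calc C + ((n:ℝ≥0∞)+1)⁻¹ ≤ C + (n:ℝ≥0∞)⁻¹ := by
            gcongr
            exact le_add_of_nonneg_right zero_le_one
        _ ≤ C + ((‖u x‖₊ : ℝ≥0∞) - C) := add_le_add_right hn.le C
        _ = (‖u x‖₊ : ℝ≥0∞) := hsub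
    · exact ENNReal.lt_add_right hCfin (by simp)
    · exact ENNReal.add_ne_top.mpr ⟨hCfin, by simp [ENNReal.inv_ne_top]⟩
  have hess : eLpNorm u ⊤ μ ≤ C := by
    rw [eLpNorm_exponent_top, eLpNormEssSup]
    exact essSup_le_of_ae_le C hae
  exact ⟨⟨hu.aestronglyMeasurable, lt_of_le_of_lt hess hCfin.lt_top⟩, hess⟩
end
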